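/- Let P_n denote the path graph on n vertices. Then c(P_n) = 0 if n ≡ 1 (mod 3), and c(P_n) ≤ 1 otherwise. -/

import Mathlib

open Classical

variable {V : Type*}

/-- A finset of vertices is independent if no two of its members are adjacent. -/
def IsIndepSet (G : SimpleGraph V) (s : Finset V) : Prop :=
  ∀ u ∈ s, ∀ v ∈ s, ¬ G.Adj u v

/-- The set of faces of the independence complex of `G` (including the empty face). -/
def IndFaces (G : SimpleGraph V) : Set (Finset V) :=
  {s | IsIndepSet G s}

/-- `P` is a matching on the face poset `Δ`: a set of disjoint covering pairs. -/
def IsPosetMatching (Δ : Set (Finset V)) (P : Set (Finset V × Finset V)) : Prop :=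
  (∀ p ∈ P, p.1 ∈ Δ ∧ p.2 ∈ Δ ∧ p.1 ⊆ p.2 ∧ p.2.card = p.1.card + 1) ∧
  (∀ p ∈ P, ∀ q ∈ P, p ≠ q → p.1 ≠ q.1 ∧ p.1 ≠ q.2 ∧ p.2 ≠ q.1 ∧ p.2 ≠ q.2)

/-- A cycle in a matching: distinct matched pairs `{σ₁⊂τ₁},…,{σₙ⊂τₙ}`, `n > 1`,
with `σ_{i+1} ⊂ τ_i` for `i < n` and `σ₁ ⊂ τₙ`. -/
def MatchingHasCycle (P : Set (Finset V × Finset V)) : Prop :=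
  ∃ n : ℕ, 2 ≤ n ∧ ∃ f : ℕ → Finset V × Finset V,
    (∀ i < n, f i ∈ P) ∧ Set.InjOn f (Set.Iio n) ∧
    (∀ i, i + 1 < n → (f (i + 1)).1 ⊂ (f i).2) ∧ (f 0).1 ⊂ (f (n - 1)).2

/-- An acyclic (Morse) matching on the face poset `Δ`. -/
def IsAcyclicMatching (Δ : Set (Finset V)) (P : Set (Finset V × Finset V)) : Prop :=
  IsPosetMatching Δ P ∧ ¬ MatchingHasCycle P

/-- The critical (unmatched) faces of `Δ` with respect to `P`. -/
def criticalSet (Δ : Set (Finset V)) (P : Set (Finset V × Finset V)) : Set (Finset V) :=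
  {s ∈ Δ | ∀ p ∈ P, s ≠ p.1 ∧ s ≠ p.2}

/-- `cInvariant G` is the minimal number of critical cells in an acyclic matching on the
face poset of the independence complex of `G`. -/
noncomputable def cInvariant (G : SimpleGraph V) : ℕ :=
  sInf {n | ∃ P, IsAcyclicMatching (IndFaces G) P ∧ (criticalSet (IndFaces G) P).ncard = n}

namespace Aux

variable {n : ℕ}

lemma pred_ex (n : ℕ) (S : Finset (Fin n)) : ∃ k, ∀ x ∈ S, (x : ℕ) ≠ 3 * k + 1 :=
  ⟨n, fun x _ => by have := x.isLt; omega⟩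

noncomputable def kk (S : Finset (Fin n)) : ℕ := Nat.find (pred_ex n S)

lemma kk_spec (S : Finset (Fin n)) : ∀ x ∈ S, (x : ℕ) ≠ 3 * kk S + 1 :=
  Nat.find_spec (pred_ex n S)

lemma kk_min {S : Finset (Fin n)} {j : ℕ} (h : j < kk S) : ∃ x ∈ S, (x : ℕ) = 3 * j + 1 := by
  have := Nat.find_min (pred_ex n S) h
  push_neg at this
  exact this

lemma kk_le {S : Finset (Fin n)} {j : ℕ} (h : ∀ x ∈ S, (x : ℕ) ≠ 3 * j + 1) : kk S ≤ j :=
  Nat.find_le h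

lemma kk_insert {S : Finset (Fin n)} {a : Fin n} (ha : (a : ℕ) % 3 ≠ 1) :
    kk (insert a S) = kk S := by
  apply le_antisymm
  · apply kk_le
    intro x hx hx1
    rcases Finset.mem_insert.1 hx with h | h
    · subst h; omega
    · exact kk_spec S x h hx1
  · apply kk_le
    intro x hx hx1
    exact kk_spec (insert a S) x (Finset.mem_insert_of_mem hx) hx1

end Aux

namespace Aux2
open Aux

variable {n : ℕ}

noncomputable abbrev vtx (S : Finset (Fin n)) (h : 3 * kk S < n) : Fin n := ⟨3 * kk S, h⟩

/-- The matching on the independence complex of the path graph. -/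
def MP (n : ℕ) : Set (Finset (Fin n) × Finset (Fin n)) :=
  {p | ∃ S : Finset (Fin n), IsIndepSet (SimpleGraph.pathGraph n) S ∧
       ∃ h : 3 * kk S < n, vtx S h ∉ S ∧ p = (S, insert (vtx S h) S)}

lemma indep_insert {S : Finset (Fin n)} (hS : IsIndepSet (SimpleGraph.pathGraph n) S)
    (h : 3 * kk S < n) (hv : vtx S h ∉ S) :
    IsIndepSet (SimpleGraph.pathGraph n) (insert (vtx S h) S) := by
  -- no element of S is adjacent to vtx
  have key : ∀ x ∈ S, ¬ (SimpleGraph.pathGraph n).Adj (vtx S h) x := by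
    intro x hx hadj
    rw [SimpleGraph.pathGraph_adj] at hadj
    simp only [vtx] at hadj
    rcases hadj with h1 | h1
    · -- x = 3*kk S + 1 ∈ S, contradiction
      exact kk_spec S x hx h1.symm
    · -- x + 1 = 3 * kk S, so x = 3*(kk S - 1) + 2; then 3*(kk S -1)+1 ∈ S adjacent to x
      have hk : 1 ≤ kk S := by omega
      obtain ⟨y, hy, hy1⟩ := kk_min (S := S) (j := kk S - 1) (by omega)
      have : (SimpleGraph.pathGraph n).Adj y x := by
        rw [SimpleGraph.pathGraph_adj]; omega
      exact hS y hy x hx this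
  intro u hu v hv' hadj
  rcases Finset.mem_insert.1 hu with hu | hu <;> rcases Finset.mem_insert.1 hv' with hv' | hv'
  · subst hu; subst hv'; exact (SimpleGraph.pathGraph n).loopless.irrefl _ hadj
  · subst hu; exact key v hv' hadj
  · subst hv'; exact key u hu hadj.symm
  · exact hS u hu v hv' hadj

lemma mem_MP_iff {p : Finset (Fin n) × Finset (Fin n)} :
    p ∈ MP n ↔ ∃ S : Finset (Fin n), IsIndepSet (SimpleGraph.pathGraph n) S ∧
       ∃ h : 3 * kk S < n, vtx S h ∉ S ∧ p = (S, insert (vtx S h) S) := Iff.rfl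

lemma kk_insert_vtx {S : Finset (Fin n)} (h : 3 * kk S < n) :
    kk (insert (vtx S h) S) = kk S := by
  apply kk_insert
  simp [vtx]

lemma posetMatching : IsPosetMatching (IndFaces (SimpleGraph.pathGraph n)) (MP n) := by
  constructor
  · rintro p ⟨S, hS, h, hv, rfl⟩
    refine ⟨hS, indep_insert hS h hv, Finset.subset_insert _ _, ?_⟩
    simp [Finset.card_insert_of_notMem hv]
  · rintro p ⟨S, hS, h, hv, rfl⟩ q ⟨T, hT, h', hv', rfl⟩ hne
    have hST : S ≠ T := fun hEq => hne (by subst hEq; rfl)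
    refine ⟨hST, ?_, ?_, ?_⟩
    · -- S ≠ insert (vtx T) T
      intro hEq
      dsimp only at hEq
      have : kk S = kk T := by rw [hEq, kk_insert_vtx]
      have hmem : vtx T h' ∈ S := by rw [hEq]; exact Finset.mem_insert_self _ _
      have hvv : vtx S h = vtx T h' := Fin.ext (by simp [vtx, this])
      exact hv (hvv ▸ hmem)
    · intro hEq
      dsimp only at hEq
      have : kk T = kk S := by rw [← hEq, kk_insert_vtx]
      have hmem : vtx S h ∈ T := by rw [← hEq]; exact Finset.mem_insert_self _ _
      have hvv : vtx T h' = vtx S h := Fin.ext (by simp [vtx, this])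
      exact hv' (hvv ▸ hmem)
    · intro hEq
      dsimp only at hEq
      have hkk : kk S = kk T := by
        have := kk_insert_vtx (S := S) h
        have h2 := kk_insert_vtx (S := T) h'
        rw [← this, hEq, h2]
      have hvv : vtx S h = vtx T h' := by ext; simp [vtx, hkk]
      apply hST
      have : Finset.erase (insert (vtx S h) S) (vtx S h) =
          Finset.erase (insert (vtx T h') T) (vtx T h') := by rw [hEq, hvv]
      rwa [Finset.erase_insert hv, Finset.erase_insert hv'] at this

end Aux2

namespace Aux2
open Aux

variable {n : ℕ}

lemma pair_eq {m : ℕ} {f : ℕ → Finset (Fin n) × Finset (Fin n)}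
    (hfP : ∀ i < m, f i ∈ MP n) {i : ℕ} (hi : i < m) :
    ∃ h : 3 * kk (f i).1 < n, vtx (f i).1 h ∉ (f i).1 ∧
      (f i).2 = insert (vtx (f i).1 h) (f i).1 := by
  obtain ⟨S, _, h, hv, hEq⟩ := hfP i hi
  rw [hEq]
  exact ⟨h, hv, rfl⟩

lemma acyclic : ¬ MatchingHasCycle (MP n) := by
  rintro ⟨m, hm2, f, hfP, hinj, hstep, hwrap⟩
  -- cardinalities
  let c : ℕ → ℕ := fun i => (f i).1.card
  have hc : ∀ i, c i = (f i).1.card := fun _ => rfl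
  have cstep : ∀ i, i + 1 < m → c (i + 1) ≤ c i := by
    intro i hi
    obtain ⟨h, hv, h2⟩ := pair_eq hfP (by omega : i < m)
    have hss := hstep i hi
    rw [h2] at hss
    have := Finset.card_lt_card hss
    rw [Finset.card_insert_of_notMem hv] at this
    rw [hc, hc]; omega
  have cchain : ∀ i j, i ≤ j → j < m → c j ≤ c i := by
    intro i j hij hjm
    induction j with
    | zero => rw [Nat.le_zero.mp hij]
    | succ j ih =>
      rcases Nat.eq_or_lt_of_le hij with rfl | hlt
      · exact le_rfl
      · exact le_trans (cstep j hjm) (ih (by omega) (by omega))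
  have cwrap : c 0 ≤ c (m - 1) := by
    obtain ⟨h, hv, h2⟩ := pair_eq hfP (by omega : m - 1 < m)
    have hss := hwrap
    rw [h2] at hss
    have := Finset.card_lt_card hss
    rw [Finset.card_insert_of_notMem hv] at this
    rw [hc, hc]; omega
  have callEq : ∀ i < m, c i = c 0 := by
    intro i hi
    have h1 : c i ≤ c 0 := cchain 0 i (by omega) hi
    have h2 : c (m - 1) ≤ c i := cchain i (m - 1) (by omega) (by omega)
    have h3 : c 0 ≤ c (m - 1) := cwrap
    omega
  -- refined step: kk strictly decreases
  have refined : ∀ a b, a < m → b < m → a ≠ b → (f b).1 ⊂ (f a).2 → c b = c a →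
      kk (f b).1 < kk (f a).1 := by
    intro a b ham hbm hab hss hcc
    obtain ⟨ha, hva, ha2⟩ := pair_eq hfP ham
    obtain ⟨hb, hvb, hb2⟩ := pair_eq hfP hbm
    rw [ha2] at hss
    by_cases hmem : vtx (f a).1 ha ∈ (f b).1
    · -- kk (f b).1 ≤ kk (f a).1
      have hle : kk (f b).1 ≤ kk (f a).1 := by
        apply kk_le
        intro x hx
        rcases Finset.mem_insert.1 (hss.1 hx) with hx' | hx'
        · subst hx'; simp [vtx]
        · exact kk_spec _ x hx'
      rcases Nat.lt_or_ge (kk (f b).1) (kk (f a).1) with h | h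
      · exact h
      · exfalso
        have hkeq : kk (f b).1 = kk (f a).1 := le_antisymm hle h
        have : vtx (f b).1 hb = vtx (f a).1 ha := Fin.ext (by simp [vtx, hkeq])
        exact hvb (this ▸ hmem)
    · -- then (f b).1 ⊆ (f a).1, equal cards → equal → f b = f a, contra injectivity
      exfalso
      have hsub : (f b).1 ⊆ (f a).1 := by
        intro x hx
        rcases Finset.mem_insert.1 (hss.1 hx) with hx' | hx'
        · exact absurd (hx' ▸ hx) hmem
        · exact hx'
      rw [hc, hc] at hcc
      have heq1 : (f b).1 = (f a).1 :=
        Finset.eq_of_subset_of_card_le hsub (by omega)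
      have hkeq : kk (f b).1 = kk (f a).1 := by rw [heq1]
      have hveq : vtx (f b).1 hb = vtx (f a).1 ha := Fin.ext (by simp [vtx, hkeq])
      have heq2 : (f b).2 = (f a).2 := by rw [ha2, hb2, hveq, heq1]
      exact hab (hinj (Set.mem_Iio.2 hbm) (Set.mem_Iio.2 ham) (Prod.ext heq1 heq2)).symm
  have kstep : ∀ i, i + 1 < m → kk (f (i + 1)).1 < kk (f i).1 := by
    intro i hi
    exact refined i (i + 1) (by omega) hi (by omega) (hstep i hi)
      (by rw [callEq i (by omega), callEq (i + 1) hi])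
  have kchain : ∀ j, j < m → kk (f j).1 + j ≤ kk (f 0).1 := by
    intro j
    induction j with
    | zero => intro _; omega
    | succ j ih =>
      intro hj
      have h1 := ih (by omega)
      have h2 := kstep j hj
      omega
  have hlast := kchain (m - 1) (by omega)
  have hwk : kk (f 0).1 < kk (f (m - 1)).1 :=
    refined (m - 1) 0 (by omega) (by omega) (by omega) hwrap
      (by rw [callEq (m - 1) (by omega), callEq 0 (by omega)])
  omega

end Aux2

namespace Aux2
open Aux

variable {n : ℕ}

lemma indep_subset {S T : Finset (Fin n)} (h : T ⊆ S)
    (hS : IsIndepSet (SimpleGraph.pathGraph n) S) :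
    IsIndepSet (SimpleGraph.pathGraph n) T :=
  fun u hu v hv => hS u (h hu) v (h hv)

lemma crit_iff {S : Finset (Fin n)} :
    S ∈ criticalSet (IndFaces (SimpleGraph.pathGraph n)) (MP n) ↔
      IsIndepSet (SimpleGraph.pathGraph n) S ∧ n ≤ 3 * kk S := by
  constructor
  · rintro ⟨hS, hcrit⟩
    refine ⟨hS, ?_⟩
    by_contra hn
    push_neg at hn
    by_cases hv : vtx S hn ∈ S
    · -- S is the upper element of a pair
      set T := S.erase (vtx S hn) with hT
      have hsub : T ⊆ S := Finset.erase_subset _ _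
      have hTS : insert (vtx S hn) T = S := Finset.insert_erase hv
      have hkT : kk T = kk S := by
        conv_rhs => rw [← hTS]
        rw [kk_insert (by simp [vtx])]
      have hT3 : 3 * kk T < n := by rw [hkT]; exact hn
      have hvT : vtx T hT3 = vtx S hn := Fin.ext (by simp [vtx, hkT])
      have hp : (T, insert (vtx T hT3) T) ∈ MP n :=
        ⟨T, indep_subset hsub hS, hT3, by rw [hvT]; exact Finset.notMem_erase _ _, rfl⟩
      have := (hcrit _ hp).2
      apply this
      dsimp only
      rw [hvT, hTS]
    · have hp : (S, insert (vtx S hn) S) ∈ MP n := ⟨S, hS, hn, hv, rfl⟩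
      exact (hcrit _ hp).1 rfl
  · rintro ⟨hS, hn⟩
    refine ⟨hS, ?_⟩
    rintro p ⟨T, hT, h, hv, rfl⟩
    constructor
    · intro hEq
      dsimp only at hEq
      subst hEq
      omega
    · intro hEq
      dsimp only at hEq
      have : kk S = kk T := by rw [hEq, kk_insert_vtx]
      omega

lemma crit_empty (h1 : n % 3 = 1) :
    criticalSet (IndFaces (SimpleGraph.pathGraph n)) (MP n) = ∅ := by
  ext S
  simp only [Set.mem_empty_iff_false, iff_false]
  intro hcrit
  obtain ⟨hS, hn⟩ := crit_iff.1 hcrit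
  -- n = 3m+1; then m < kk S, so 3m+1 ∈ S, but 3m+1 = n
  have hm : n / 3 < kk S := by omega
  obtain ⟨x, _, hx⟩ := kk_min hm
  have := x.isLt
  omega

lemma crit_subsingleton (h1 : n % 3 ≠ 1) :
    (criticalSet (IndFaces (SimpleGraph.pathGraph n)) (MP n)).Subsingleton := by
  -- any critical set equals {x | x % 3 = 1}
  have char : ∀ S ∈ criticalSet (IndFaces (SimpleGraph.pathGraph n)) (MP n),
      ∀ x : Fin n, x ∈ S ↔ (x : ℕ) % 3 = 1 := by
    intro S hScrit x
    obtain ⟨hS, hn⟩ := crit_iff.1 hScrit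
    have fwd : ∀ y : Fin n, (y : ℕ) % 3 = 1 → y ∈ S := by
      intro y hy
      have hj : (y : ℕ) / 3 < kk S := by have := y.isLt; omega
      obtain ⟨z, hz, hzv⟩ := kk_min hj
      have : z = y := Fin.ext (by omega)
      exact this ▸ hz
    constructor
    · intro hx
      by_contra hx1
      have h3 : (x : ℕ) % 3 = 0 ∨ (x : ℕ) % 3 = 1 ∨ (x : ℕ) % 3 = 2 := by omega
      rcases h3 with h0 | h0 | h0
      · -- x ≡ 0: x+1 ∈ S adjacent
        have hlt : (x : ℕ) + 1 < n := by have := x.isLt; omega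
        have hy : (⟨(x : ℕ) + 1, hlt⟩ : Fin n) ∈ S := fwd _ (by simp; omega)
        exact hS x hx _ hy (SimpleGraph.pathGraph_adj.2 (Or.inl rfl))
      · exact hx1 h0
      · -- x ≡ 2: x-1 ∈ S adjacent
        have hlt : (x : ℕ) - 1 < n := by have := x.isLt; omega
        have hy : (⟨(x : ℕ) - 1, hlt⟩ : Fin n) ∈ S := fwd _ (by simp; omega)
        refine hS x hx _ hy (SimpleGraph.pathGraph_adj.2 (Or.inr ?_))
        simp; omega
    · exact fwd x
  intro S hScrit T hTcrit
  ext x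
  rw [char S hScrit x, char T hTcrit x]

end Aux2

/-- For the path `Pₙ` on `n` vertices, `c(Pₙ) = 0` if `n ≡ 1 (mod 3)` and `c(Pₙ) ≤ 1`
otherwise. -/
theorem statement_8 (n : ℕ) :
    (n % 3 = 1 → cInvariant (SimpleGraph.pathGraph n) = 0) ∧
    (n % 3 ≠ 1 → cInvariant (SimpleGraph.pathGraph n) ≤ 1) := by
  have hmem : ∀ k, (criticalSet (IndFaces (SimpleGraph.pathGraph n)) (Aux2.MP n)).ncard = k →
      cInvariant (SimpleGraph.pathGraph n) ≤ k := by
    intro k hk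
    exact Nat.sInf_le ⟨Aux2.MP n, ⟨Aux2.posetMatching, Aux2.acyclic⟩, hk⟩
  constructor
  · intro h1
    have h0 := hmem 0 (by rw [Aux2.crit_empty h1]; simp)
    omega
  · intro h1
    have hsub := Aux2.crit_subsingleton (n := n) h1
    have hle : (criticalSet (IndFaces (SimpleGraph.pathGraph n)) (Aux2.MP n)).ncard ≤ 1 :=
      (Set.ncard_le_one (Set.toFinite _)).2 fun a ha b hb => hsub ha hb
    exact le_trans (hmem _ rfl) hle
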